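/- Let m ≥ 4, s ≥ 1 and α ≥ 2 be integers, let y ∈ [s/(m+s), (s+1)/(m+s+1)], and let r ≥ s+1 be an integer satisfying s ≥ r − (r + 1 + (s+1)²/m)^{1/α}. Then M_{r,m,s}(y) ≤ 4·(1−y)·y^{1/α}/m^{1−1/α}. -/

import Mathlib

/-- `z_{m,r}(y) = C(m+r, r) · y^r`. -/
noncomputable def z (m r : ℕ) (y : ℝ) : ℝ := (Nat.choose (m + r) r : ℝ) * y ^ r

/-- `m_{r,m,s}(y) = z_{m,r}(y) / z_{m,s}(y)`. -/
noncomputable def mRatio (m r s : ℕ) (y : ℝ) : ℝ := z m r y / z m s y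

/-- `M_{r,m,s}(y) = m_{r,m,s}(y) · |r/(m+r) − y|`. -/
noncomputable def MKer (m r s : ℕ) (y : ℝ) : ℝ :=
  mRatio m r s y * |(r : ℝ) / ((m : ℝ) + r) - y|

lemma z_le_aux (m s : ℕ) (y : ℝ) (hy0 : 0 ≤ y) (hy : y * ((m:ℝ)+s+1) ≤ (s:ℝ)+1)
    (hy1 : y ≤ 1) : ∀ k : ℕ, z m (s+k) y ≤ z m s y := by
  intro k
  induction k with
  | zero => simp [z]
  | succ k ih =>
    have hch := Nat.add_one_mul_choose_eq (m + (s+k)) (s+k)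
    have hchR : ((m+(s+k)+1 : ℕ) : ℝ) * ((m + (s+k)).choose (s+k) : ℝ)
        = (((m+(s+k)+1).choose ((s+k)+1) : ℕ) : ℝ) * (((s+k)+1 : ℕ) : ℝ) := by
      exact_mod_cast hch
    have hkey : (((m+(s+k)+1).choose ((s+k)+1) : ℕ) : ℝ) * y
        ≤ ((m + (s+k)).choose (s+k) : ℝ) := by
      have hpos : (0:ℝ) < ((s:ℝ)+(k:ℝ)+1) := by positivity
      rw [← mul_le_mul_iff_of_pos_right hpos]
      have hcb : (0:ℝ) ≤ ((m + (s+k)).choose (s+k) : ℝ) := by positivity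
      have hky : (k:ℝ) * y ≤ (k:ℝ) * 1 :=
        mul_le_mul_of_nonneg_left hy1 (Nat.cast_nonneg k)
      have hyy : ((m:ℝ)+(s:ℝ)+(k:ℝ)+1) * y ≤ (s:ℝ)+(k:ℝ)+1 := by nlinarith
      have e : (((m+(s+k)+1).choose ((s+k)+1) : ℕ) : ℝ) * y * ((s:ℝ)+(k:ℝ)+1)
          = (((m+(s+k)+1).choose ((s+k)+1) : ℕ) : ℝ) * (((s+k)+1 : ℕ) : ℝ) * y := by
        push_cast; ring
      rw [e, ← hchR]
      calc ((m+(s+k)+1 : ℕ) : ℝ) * ((m + (s+k)).choose (s+k) : ℝ) * y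
          = ((m + (s+k)).choose (s+k) : ℝ) * (((m:ℝ)+(s:ℝ)+(k:ℝ)+1) * y) := by
            push_cast; ring
        _ ≤ ((m + (s+k)).choose (s+k) : ℝ) * ((s:ℝ)+(k:ℝ)+1) :=
            mul_le_mul_of_nonneg_left hyy hcb
        _ = ((m + (s+k)).choose (s+k) : ℝ) * ((s:ℝ)+(k:ℝ)+1) := rfl
    calc z m (s+(k+1)) y
        = ((((m+(s+k)+1).choose ((s+k)+1) : ℕ) : ℝ) * y) * y ^ (s+k) := by
          show (((m+(s+k)+1).choose ((s+k)+1) : ℕ) : ℝ) * y ^ ((s+k)+1) = _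
          rw [pow_succ]; ring
      _ ≤ ((m + (s+k)).choose (s+k) : ℝ) * y ^ (s+k) :=
          mul_le_mul_of_nonneg_right hkey (pow_nonneg hy0 _)
      _ = z m (s+k) y := rfl
      _ ≤ z m s y := ih

set_option maxHeartbeats 2000000 in
theorem MKer_bound_right (m s α r : ℕ) (hm : 4 ≤ m) (hs : 1 ≤ s) (hα : 2 ≤ α)
    (y : ℝ) (hy : y ∈ Set.Icc ((s : ℝ) / ((m : ℝ) + s)) (((s : ℝ) + 1) / ((m : ℝ) + s + 1)))
    (hr : s + 1 ≤ r)
    (hcond : (r : ℝ) - ((r : ℝ) + 1 + ((s : ℝ) + 1) ^ 2 / m) ^ ((1 : ℝ) / α) ≤ (s : ℝ)) :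
    MKer m r s y ≤ 4 * (1 - y) * y ^ ((1 : ℝ) / α) / (m : ℝ) ^ (1 - (1 : ℝ) / α) := by
  obtain ⟨hy1, hy2⟩ := hy
  have hM : (4:ℝ) ≤ (m:ℝ) := by exact_mod_cast hm
  have hS : (1:ℝ) ≤ (s:ℝ) := by exact_mod_cast hs
  have hR : (s:ℝ)+1 ≤ (r:ℝ) := by exact_mod_cast hr
  have hM0 : (0:ℝ) < (m:ℝ) := by linarith
  have hS0 : (0:ℝ) < (s:ℝ) := by linarith
  have hMS : (0:ℝ) < (m:ℝ)+(s:ℝ) := by linarith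
  have hMS1 : (0:ℝ) < (m:ℝ)+(s:ℝ)+1 := by linarith
  have hR0 : (0:ℝ) < (r:ℝ) := by linarith
  have hMR : (0:ℝ) < (m:ℝ)+(r:ℝ) := by linarith
  have hy0 : 0 < y := lt_of_lt_of_le (by positivity) hy1
  have hy2' : y * ((m:ℝ)+(s:ℝ)+1) ≤ (s:ℝ)+1 := (le_div_iff₀ hMS1).mp hy2
  have hylt1 : y < 1 := lt_of_le_of_lt hy2 (by rw [div_lt_one hMS1]; linarith)
  -- exponent
  have hα2 : (2:ℝ) ≤ (α:ℝ) := by exact_mod_cast hα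
  have hα0 : (0:ℝ) < (α:ℝ) := by linarith
  set t : ℝ := (1:ℝ)/(α:ℝ) with ht_def
  have ht0 : 0 < t := by positivity
  have ht2 : t ≤ 1/2 := by
    rw [ht_def, div_le_div_iff₀ hα0 (by norm_num : (0:ℝ) < 2)]; linarith
  -- mRatio ≤ 1
  have hzs : 0 < z m s y := by
    have hc : (0:ℝ) < ((m+s).choose s : ℝ) := by
      exact_mod_cast Nat.choose_pos (by omega : s ≤ m+s)
    exact mul_pos hc (pow_pos hy0 s)
  have hmr : mRatio m r s y ≤ 1 := by
    rw [mRatio, div_le_one hzs]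
    have hk : r = s + (r - s) := by omega
    calc z m r y = z m (s + (r-s)) y := by rw [← hk]
      _ ≤ z m s y := z_le_aux m s y hy0.le hy2' hylt1.le (r-s)
  have hmr0 : 0 ≤ mRatio m r s y := by
    apply div_nonneg _ hzs.le
    unfold z
    positivity
  -- y ≤ r/(m+r)
  have hry : y ≤ (r:ℝ)/((m:ℝ)+(r:ℝ)) := by
    refine le_trans hy2 ?_
    rw [div_le_div_iff₀ hMS1 hMR]
    nlinarith
  have h1 : MKer m r s y ≤ (r:ℝ)/((m:ℝ)+(r:ℝ)) - y := by
    rw [MKer, abs_of_nonneg (by linarith)]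
    have := mul_le_mul_of_nonneg_right hmr (by linarith : (0:ℝ) ≤ (r:ℝ)/((m:ℝ)+(r:ℝ)) - y)
    linarith
  have h2 : (r:ℝ)/((m:ℝ)+(r:ℝ)) - y
      ≤ (m:ℝ)*((r:ℝ)-(s:ℝ))/(((m:ℝ)+(r:ℝ))*((m:ℝ)+(s:ℝ))) := by
    have he : (r:ℝ)/((m:ℝ)+(r:ℝ)) - (s:ℝ)/((m:ℝ)+(s:ℝ))
        = (m:ℝ)*((r:ℝ)-(s:ℝ))/(((m:ℝ)+(r:ℝ))*((m:ℝ)+(s:ℝ))) := by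
      field_simp; ring
    linarith
  -- the key quantities
  set A : ℝ := (r:ℝ) + 1 + ((s:ℝ)+1)^2/(m:ℝ) with hA_def
  set B : ℝ := (m:ℝ)*(s:ℝ)/((m:ℝ)+(s:ℝ)) with hB_def
  set C : ℝ := 4*((m:ℝ)+(r:ℝ))*((m:ℝ)+(s:ℝ))/((m:ℝ)*((m:ℝ)+(s:ℝ)+1)) with hC_def
  have hA0 : (0:ℝ) < A := by rw [hA_def]; positivity
  have hA1 : (1:ℝ) ≤ A := by
    have : (0:ℝ) ≤ ((s:ℝ)+1)^2/(m:ℝ) := by positivity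
    rw [hA_def]; linarith
  have hB0 : (0:ℝ) < B := by rw [hB_def]; positivity
  have hC0 : (0:ℝ) < C := by rw [hC_def]; positivity
  have hC1 : (1:ℝ) ≤ C := by
    rw [hC_def, le_div_iff₀ (by positivity)]
    nlinarith
  have hrs : (r:ℝ) - (s:ℝ) ≤ A ^ t := by linarith [hcond]
  -- (r-s)^2 ≤ A
  have hsq : ((r:ℝ)-(s:ℝ))^2 ≤ A := by
    have hAt : A ^ t ≤ A ^ ((1:ℝ)/2) := Real.rpow_le_rpow_of_exponent_le hA1 ht2
    have h3 : (r:ℝ)-(s:ℝ) ≤ Real.sqrt A := by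
      rw [Real.sqrt_eq_rpow]; linarith
    have h4 := mul_self_le_mul_self (by linarith : (0:ℝ) ≤ (r:ℝ)-(s:ℝ)) h3
    rw [Real.mul_self_sqrt hA0.le] at h4
    rw [sq]; exact h4
  have hq : 4*((r:ℝ)-(s:ℝ))^2 ≤ 4*(r:ℝ)+4+((s:ℝ)+1)^2 := by
    have hdiv : ((s:ℝ)+1)^2/(m:ℝ) ≤ ((s:ℝ)+1)^2/4 := by gcongr
    rw [hA_def] at hsq
    nlinarith [hsq, hdiv]
  have h2r : 2*(r:ℝ) ≤ 3*(s:ℝ)+4 := by nlinarith [hq, hR, hS]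
  -- key polynomial inequality
  have key : ((m:ℝ)*((r:ℝ)+1)+((s:ℝ)+1)^2) * ((m:ℝ)+(s:ℝ)+1)^2
      ≤ 16*((m:ℝ)+(r:ℝ))^2*((m:ℝ)+(s:ℝ))*(s:ℝ) := by
    have e1 : (m:ℝ)*((r:ℝ)+1)+((s:ℝ)+1)^2 ≤ 5*(s:ℝ)*((m:ℝ)+(s:ℝ)) := by nlinarith
    have e2 : ((m:ℝ)+(s:ℝ)+1)^2 ≤ ((m:ℝ)+(r:ℝ))^2 := by nlinarith
    calc ((m:ℝ)*((r:ℝ)+1)+((s:ℝ)+1)^2) * ((m:ℝ)+(s:ℝ)+1)^2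
        ≤ (5*(s:ℝ)*((m:ℝ)+(s:ℝ))) * (((m:ℝ)+(r:ℝ))^2) :=
          mul_le_mul e1 e2 (by positivity) (by positivity)
      _ ≤ 16*((m:ℝ)+(r:ℝ))^2*((m:ℝ)+(s:ℝ))*(s:ℝ) := by nlinarith [mul_nonneg (mul_nonneg hS0.le hMS.le) (sq_nonneg ((m:ℝ)+(r:ℝ)))]
  -- A/B ≤ C^2
  have hDC : A/B ≤ C^2 := by
    rw [div_le_iff₀ hB0]
    have hCB : C^2*B = 16*((m:ℝ)+(r:ℝ))^2*((m:ℝ)+(s:ℝ))*(s:ℝ)/((m:ℝ)*((m:ℝ)+(s:ℝ)+1)^2) := by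
      rw [hC_def, hB_def]; field_simp; ring
    rw [hCB, le_div_iff₀ (by positivity)]
    have hA' : A * ((m:ℝ)*((m:ℝ)+(s:ℝ)+1)^2)
        = ((m:ℝ)*((r:ℝ)+1)+((s:ℝ)+1)^2) * ((m:ℝ)+(s:ℝ)+1)^2 := by
      rw [hA_def]; field_simp
    rw [hA']; exact key
  -- (A/B)^t ≤ C
  have hDt : (A/B)^t ≤ C := by
    rcases le_or_gt (A/B) 1 with h|h
    · calc (A/B)^t ≤ 1^t := Real.rpow_le_rpow (by positivity) h ht0.le
        _ = 1 := Real.one_rpow t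
        _ ≤ C := hC1
    · have ha : (A/B)^t ≤ (A/B)^((1:ℝ)/2) := Real.rpow_le_rpow_of_exponent_le h.le ht2
      have hb : (A/B)^((1:ℝ)/2) ≤ C := by
        rw [← Real.sqrt_eq_rpow]
        have := Real.sqrt_le_sqrt hDC
        rwa [Real.sqrt_sq hC0.le] at this
      linarith
  have hABt : A^t ≤ C * B^t := by
    have he : A^t = (A/B)^t * B^t := by
      rw [← Real.mul_rpow (by positivity) hB0.le, div_mul_cancel₀ _ hB0.ne']
    rw [he]
    exact mul_le_mul_of_nonneg_right hDt (Real.rpow_nonneg hB0.le t)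
  -- h3 : M(R-S)/((M+R)(M+S)) ≤ 4 B^t/(M+S+1)
  have h3 : (m:ℝ)*((r:ℝ)-(s:ℝ))/(((m:ℝ)+(r:ℝ))*((m:ℝ)+(s:ℝ)))
      ≤ 4*B^t/((m:ℝ)+(s:ℝ)+1) := by
    rw [div_le_div_iff₀ (by positivity) hMS1]
    have hCe : (m:ℝ)*((m:ℝ)+(s:ℝ)+1)*C = 4*((m:ℝ)+(r:ℝ))*((m:ℝ)+(s:ℝ)) := by
      rw [hC_def]; field_simp
    calc (m:ℝ)*((r:ℝ)-(s:ℝ))*((m:ℝ)+(s:ℝ)+1)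
        ≤ (m:ℝ)*(A^t)*((m:ℝ)+(s:ℝ)+1) := by
          apply mul_le_mul_of_nonneg_right _ hMS1.le
          exact mul_le_mul_of_nonneg_left hrs hM0.le
      _ = (m:ℝ)*((m:ℝ)+(s:ℝ)+1)*(A^t) := by ring
      _ ≤ (m:ℝ)*((m:ℝ)+(s:ℝ)+1)*(C*B^t) :=
          mul_le_mul_of_nonneg_left hABt (by positivity)
      _ = ((m:ℝ)*((m:ℝ)+(s:ℝ)+1)*C)*B^t := by ring
      _ = (4*((m:ℝ)+(r:ℝ))*((m:ℝ)+(s:ℝ)))*B^t := by rw [hCe]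
      _ = 4*B^t*(((m:ℝ)+(r:ℝ))*((m:ℝ)+(s:ℝ))) := by ring
  -- h5 : 4 B^t/(M+S+1) ≤ RHS
  have h5 : 4*B^t/((m:ℝ)+(s:ℝ)+1) ≤ 4*(1-y)*y^t/(m:ℝ)^((1:ℝ)-t) := by
    have hyM : B ≤ y*(m:ℝ) := by
      have : B = (m:ℝ)*((s:ℝ)/((m:ℝ)+(s:ℝ))) := by rw [hB_def, mul_div_assoc]
      rw [this]
      calc (m:ℝ)*((s:ℝ)/((m:ℝ)+(s:ℝ))) ≤ (m:ℝ)*y := mul_le_mul_of_nonneg_left hy1 hM0.le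
        _ = y*(m:ℝ) := by ring
    have hBt : B^t ≤ (y*(m:ℝ))^t := Real.rpow_le_rpow hB0.le hyM ht0.le
    have hym : (y*(m:ℝ))^t = y^t * (m:ℝ)^t := Real.mul_rpow hy0.le hM0.le
    have h1y : (m:ℝ) ≤ (1-y)*((m:ℝ)+(s:ℝ)+1) := by
      have he : (1-y)*((m:ℝ)+(s:ℝ)+1) = (m:ℝ)+(s:ℝ)+1 - y*((m:ℝ)+(s:ℝ)+1) := by ring
      linarith
    have hM1t : (m:ℝ)^((1:ℝ)-t) = (m:ℝ)/(m:ℝ)^t := by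
      rw [Real.rpow_sub hM0, Real.rpow_one]
    rw [hM1t, div_div_eq_mul_div, div_le_div_iff₀ hMS1 hM0]
    have hymt : (0:ℝ) ≤ y^t*(m:ℝ)^t := by positivity
    calc 4*B^t*(m:ℝ) ≤ 4*(y^t*(m:ℝ)^t)*(m:ℝ) := by
          rw [← hym]; linarith [mul_le_mul_of_nonneg_right hBt hM0.le]
      _ = 4*(y^t*(m:ℝ)^t)*((m:ℝ)) := rfl
      _ ≤ 4*(y^t*(m:ℝ)^t)*((1-y)*((m:ℝ)+(s:ℝ)+1)) :=
          mul_le_mul_of_nonneg_left h1y (by positivity)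
      _ = 4*(1-y)*y^t*(m:ℝ)^t*((m:ℝ)+(s:ℝ)+1) := by ring
  linarith [h1, h2, h3, h5]
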